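/- For any integer d ≥ 3 and any real p ≥ 0, if ξ_1,…,ξ_{d−1} are nonnegative real numbers with Σ_{i=1}^{d−1} ξ_i^{p+2} = 1, then Σ_{i=1}^{d−2} (ξ_{i+1} ξ_i^{p+1} + ξ_{i+1}^{p+1} ξ_i) < 2. -/
import Mathlib


open Finset

private lemma rpow_succ' {x : ℝ} (hx : 0 ≤ x) {q : ℝ} (hq : 0 < q) :
    x ^ (q + 1) = x ^ q * x := by
  rcases eq_or_lt_of_le hx with h | h
  · rw [← h, Real.zero_rpow (by positivity), Real.zero_rpow hq.ne', zero_mul]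
  · rw [Real.rpow_add_one h.ne' q]

private lemma key_diff (p : ℝ) (hp : 0 ≤ p) {a b : ℝ} (ha : 0 ≤ a) (hb : 0 ≤ b) :
    a ^ (p + 2) + b ^ (p + 2) - (b * a ^ (p + 1) + b ^ (p + 1) * a)
      = (a - b) * (a ^ (p + 1) - b ^ (p + 1)) := by
  have h1 : a ^ (p + 2) = a ^ (p + 1) * a := by
    rw [show p + 2 = (p + 1) + 1 by ring, rpow_succ' ha (by linarith)]
  have h2 : b ^ (p + 2) = b ^ (p + 1) * b := by
    rw [show p + 2 = (p + 1) + 1 by ring, rpow_succ' hb (by linarith)]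
  rw [h1, h2]; ring

private lemma key_le (p : ℝ) (hp : 0 ≤ p) {a b : ℝ} (ha : 0 ≤ a) (hb : 0 ≤ b) :
    b * a ^ (p + 1) + b ^ (p + 1) * a ≤ a ^ (p + 2) + b ^ (p + 2) := by
  have h := key_diff p hp ha hb
  have hprod : 0 ≤ (a - b) * (a ^ (p + 1) - b ^ (p + 1)) := by
    rcases le_total a b with hab | hab
    · have := Real.rpow_le_rpow ha hab (by linarith : (0:ℝ) ≤ p + 1)
      nlinarith
    · exact mul_nonneg (by linarith)
        (by have := Real.rpow_le_rpow hb hab (by linarith : (0:ℝ) ≤ p + 1); linarith)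
  linarith

private lemma key_lt (p : ℝ) (hp : 0 ≤ p) {a b : ℝ} (ha : 0 ≤ a) (hb : 0 ≤ b)
    (hne : a ≠ b) :
    b * a ^ (p + 1) + b ^ (p + 1) * a < a ^ (p + 2) + b ^ (p + 2) := by
  have h := key_diff p hp ha hb
  have hprod : 0 < (a - b) * (a ^ (p + 1) - b ^ (p + 1)) := by
    rcases lt_or_gt_of_ne hne with hab | hab
    · exact mul_pos_of_neg_of_neg (by linarith)
        (by have := Real.rpow_lt_rpow ha hab (by linarith : (0:ℝ) < p + 1); linarith)
    · exact mul_pos (by linarith)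
        (by have := Real.rpow_lt_rpow hb hab (by linarith : (0:ℝ) < p + 1); linarith)
  linarith

/-- stated with `0`-based indices `ξ_0,…,ξ_{d-2}`.
If `ξ_i ≥ 0` and `∑_{i=0}^{d-2} ξ_i^{p+2} = 1`, then
`∑_{i=0}^{d-3} (ξ_{i+1} ξ_i^{p+1} + ξ_{i+1}^{p+1} ξ_i) < 2`. -/
theorem cross_sum_lt_two
    (d : ℕ) (hd : 3 ≤ d) (p : ℝ) (hp : 0 ≤ p)
    (ξ : ℕ → ℝ) (hξ : ∀ i, 0 ≤ ξ i)
    (hsum : ∑ i ∈ Finset.range (d - 1), ξ i ^ (p + 2) = 1) :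
    ∑ i ∈ Finset.range (d - 2), (ξ (i + 1) * ξ i ^ (p + 1) + ξ (i + 1) ^ (p + 1) * ξ i)
      < 2 := by
  have hd1 : d - 1 = (d - 2) + 1 := by omega
  -- upper bound sum: pointwise bound by ξ_i^{p+2} + ξ_{i+1}^{p+2}
  have hpt : ∀ i, ξ (i + 1) * ξ i ^ (p + 1) + ξ (i + 1) ^ (p + 1) * ξ i
      ≤ ξ i ^ (p + 2) + ξ (i + 1) ^ (p + 2) :=
    fun i => key_le p hp (hξ i) (hξ (i + 1))
  have hsum2 : ∑ i ∈ Finset.range (d - 2), (ξ i ^ (p + 2) + ξ (i + 1) ^ (p + 2))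
      = 2 - ξ 0 ^ (p + 2) - ξ (d - 2) ^ (p + 2) := by
    rw [Finset.sum_add_distrib]
    have e1 : ∑ i ∈ Finset.range (d - 1), ξ i ^ (p + 2)
        = (∑ i ∈ Finset.range (d - 2), ξ i ^ (p + 2)) + ξ (d - 2) ^ (p + 2) := by
      rw [hd1, Finset.sum_range_succ]
    have e2 : ∑ i ∈ Finset.range (d - 1), ξ i ^ (p + 2)
        = (∑ i ∈ Finset.range (d - 2), ξ (i + 1) ^ (p + 2)) + ξ 0 ^ (p + 2) := by
      rw [hd1, Finset.sum_range_succ']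
    rw [hsum] at e1 e2
    linarith
  by_cases h0 : ξ 0 = 0 ∧ ξ (d - 2) = 0
  · -- endpoints vanish; there must be a strict inequality somewhere
    obtain ⟨h00, hdd⟩ := h0
    by_cases hall : ∀ i ∈ Finset.range (d - 2), ξ (i + 1) = ξ i
    · exfalso
      have hz : ∀ i, i < d - 1 → ξ i = 0 := by
        intro i
        induction i with
        | zero => intro _; exact h00
        | succ n ih =>
          intro hn
          rw [hall n (Finset.mem_range.mpr (by omega))]
          exact ih (by omega)
      have : ∑ i ∈ Finset.range (d - 1), ξ i ^ (p + 2) = 0 := by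
        apply Finset.sum_eq_zero
        intro i hi
        rw [hz i (Finset.mem_range.mp hi), Real.zero_rpow (by positivity)]
      rw [this] at hsum; norm_num at hsum
    · push_neg at hall
      obtain ⟨j, hj, hjne⟩ := hall
      have hlt : ∑ i ∈ Finset.range (d - 2),
          (ξ (i + 1) * ξ i ^ (p + 1) + ξ (i + 1) ^ (p + 1) * ξ i)
          < ∑ i ∈ Finset.range (d - 2), (ξ i ^ (p + 2) + ξ (i + 1) ^ (p + 2)) := by
        apply Finset.sum_lt_sum (fun i _ => hpt i)
        exact ⟨j, hj, key_lt p hp (hξ j) (hξ (j + 1)) (fun h => hjne (by rw [h]))⟩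
      have hnn : 0 ≤ ξ 0 ^ (p + 2) := Real.rpow_nonneg (hξ 0) _
      have hnn2 : 0 ≤ ξ (d - 2) ^ (p + 2) := Real.rpow_nonneg (hξ (d - 2)) _
      linarith [hsum2 ▸ hlt]
  · -- an endpoint is positive
    have hle : ∑ i ∈ Finset.range (d - 2),
        (ξ (i + 1) * ξ i ^ (p + 1) + ξ (i + 1) ^ (p + 1) * ξ i)
        ≤ ∑ i ∈ Finset.range (d - 2), (ξ i ^ (p + 2) + ξ (i + 1) ^ (p + 2)) :=
      Finset.sum_le_sum (fun i _ => hpt i)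
    have hpos : 0 < ξ 0 ^ (p + 2) + ξ (d - 2) ^ (p + 2) := by
      have hnn : 0 ≤ ξ 0 ^ (p + 2) := Real.rpow_nonneg (hξ 0) _
      have hnn2 : 0 ≤ ξ (d - 2) ^ (p + 2) := Real.rpow_nonneg (hξ (d - 2)) _
      rcases not_and_or.mp h0 with h | h
      · have : 0 < ξ 0 := lt_of_le_of_ne (hξ 0) (Ne.symm h)
        have : 0 < ξ 0 ^ (p + 2) := Real.rpow_pos_of_pos this _
        linarith
      · have : 0 < ξ (d - 2) := lt_of_le_of_ne (hξ (d - 2)) (Ne.symm h)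
        have : 0 < ξ (d - 2) ^ (p + 2) := Real.rpow_pos_of_pos this _
        linarith
    linarith [hsum2 ▸ hle]
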